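/- arXiv:1706.01924 — 2 statements merged into one kernel-verified Lean document; each statement's English description precedes it below -/
import Mathlib

section
/- For α ∈ (0,1), the quantum Rényi entropy S_α(ρ) = (1/(1-α)) log Tr(ρ^α) is concave: for any finite collection of density matrices ρ_k on C^N and probability weights p_k, S_α(∑_k p_k ρ_k) ≥ ∑_k p_k S_α(ρ_k). -/
open Matrix BigOperators
open scoped ComplexOrder

/-- Trace of `ρ^α` (real power), computed via the spectral decomposition. -/
noncomputable def traceRpow {N : ℕ} (ρ : Matrix (Fin N) (Fin N) ℂ) (α : ℝ) : ℝ :=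
  if h : ρ.IsHermitian then ∑ i, (h.eigenvalues i) ^ α else 0

/-- Quantum Rényi entropy `S_α(ρ) = (1/(1-α)) log Tr(ρ^α)`. -/
noncomputable def renyiEntropy {N : ℕ} (ρ : Matrix (Fin N) (Fin N) ℂ) (α : ℝ) : ℝ :=
  (1 / (1 - α)) * Real.log (traceRpow ρ α)

lemma traceRpow_of_isHermitian {N : ℕ} {ρ : Matrix (Fin N) (Fin N) ℂ} (h : ρ.IsHermitian)
    (α : ℝ) : traceRpow ρ α = ∑ i, (h.eigenvalues i) ^ α := by
  rw [traceRpow, dif_pos h]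

lemma trace_eq_sum_eigenvalues' {N : ℕ} {A : Matrix (Fin N) (Fin N) ℂ} (h : A.IsHermitian) :
    A.trace = ∑ i, (h.eigenvalues i : ℂ) := by
  conv_lhs => rw [h.spectral_theorem, Unitary.conjStarAlgAut_apply]
  rw [Matrix.trace_mul_cycle,
    (Matrix.mem_unitaryGroup_iff').mp h.eigenvectorUnitary.2, Matrix.one_mul,
    Matrix.trace_diagonal]
  simp

/-- Core rearrangement inequality. -/
lemma sum_rpow_diag_le {N : ℕ} {α : ℝ} (hα0 : 0 < α) (hα1 : α < 1)
    {A : Matrix (Fin N) (Fin N) ℂ} (hA : A.PosSemidef)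
    (U : Matrix.unitaryGroup (Fin N) ℂ) :
    ∑ j, (hA.1.eigenvalues j) ^ α ≤
      ∑ i, (((star (U : Matrix (Fin N) (Fin N) ℂ)) * A * U) i i).re ^ α := by
  classical
  set μ := hA.1.eigenvalues with hμ
  set U' : Matrix (Fin N) (Fin N) ℂ := ↑U with hU'
  set W' : Matrix (Fin N) (Fin N) ℂ := ↑hA.1.eigenvectorUnitary with hW'
  set C : Matrix (Fin N) (Fin N) ℂ := star W' * U' with hC
  have hWs : W' * star W' = 1 := (Matrix.mem_unitaryGroup_iff).mp hA.1.eigenvectorUnitary.2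
  have hWs' : star W' * W' = 1 := (Matrix.mem_unitaryGroup_iff').mp hA.1.eigenvectorUnitary.2
  have hUs : star U' * U' = 1 := (Matrix.mem_unitaryGroup_iff').mp U.2
  have hUs' : U' * star U' = 1 := (Matrix.mem_unitaryGroup_iff).mp U.2
  have hstarC : star C = star U' * W' := by rw [hC, Matrix.star_mul, star_star]
  have hsC : star C * C = 1 := by
    rw [hstarC, hC, Matrix.mul_assoc, ← Matrix.mul_assoc W', hWs, Matrix.one_mul, hUs]
  have hsC' : C * star C = 1 := by
    rw [hstarC, hC, Matrix.mul_assoc, ← Matrix.mul_assoc U', hUs', Matrix.one_mul, hWs']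
  set w : Fin N → Fin N → ℝ := fun j i => Complex.normSq (C j i) with hw
  have hw0 : ∀ j i, 0 ≤ w j i := fun j i => Complex.normSq_nonneg _
  have hμ0 : ∀ j, 0 ≤ μ j := fun j => hA.eigenvalues_nonneg j
  have hcol : ∀ i, ∑ j, w j i = 1 := by
    intro i
    have h2 : (star C * C) i i = 1 := by rw [hsC, Matrix.one_apply_eq]
    have h3 : ((∑ j, w j i : ℝ) : ℂ) = 1 := by
      push_cast
      rw [← h2]
      simp only [Matrix.mul_apply, Matrix.star_apply, Complex.star_def, hw,
        Complex.normSq_eq_conj_mul_self]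
    exact_mod_cast h3
  have hrow : ∀ j, ∑ i, w j i = 1 := by
    intro j
    have h2 : (C * star C) j j = 1 := by rw [hsC', Matrix.one_apply_eq]
    have h3 : ((∑ i, w j i : ℝ) : ℂ) = 1 := by
      push_cast
      rw [← h2]
      simp only [Matrix.mul_apply, Matrix.star_apply, Complex.star_def, hw,
        Complex.normSq_eq_conj_mul_self]
      refine Finset.sum_congr rfl fun i _ => ?_
      ring
    exact_mod_cast h3
  have hA' : star U' * A * U' = star C * (diagonal (RCLike.ofReal ∘ μ)) * C := by
    have hsp : A = W' * diagonal (RCLike.ofReal ∘ μ) * star W' := hA.1.spectral_theorem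
    rw [hsp, hstarC, hC]
    simp only [Matrix.mul_assoc]
  have hdiag : ∀ i, ((star U' * A * U') i i).re = ∑ j, w j i * μ j := by
    intro i
    have hcx : (star C * (diagonal (RCLike.ofReal ∘ μ) : Matrix (Fin N) (Fin N) ℂ) * C) i i
        = ((∑ j, w j i * μ j : ℝ) : ℂ) := by
      push_cast
      rw [Matrix.mul_apply]
      refine Finset.sum_congr rfl fun j _ => ?_
      rw [Matrix.mul_diagonal, Matrix.star_apply]
      simp only [hw, Complex.star_def, Function.comp_apply]
      rw [Complex.normSq_eq_conj_mul_self]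
      ring_nf
      rw [mul_right_comm]
      rfl
    rw [hA', hcx, Complex.ofReal_re]
  calc ∑ j, μ j ^ α = ∑ j, (∑ i, w j i) * μ j ^ α := by
        simp [hrow]
    _ = ∑ i, ∑ j, w j i * μ j ^ α := by
        rw [Finset.sum_comm]
        simp [Finset.sum_mul]
    _ ≤ ∑ i, (∑ j, w j i * μ j) ^ α := by
        refine Finset.sum_le_sum fun i _ => ?_
        have := (Real.concaveOn_rpow hα0.le hα1.le).le_map_sum
          (t := Finset.univ) (w := fun j => w j i) (p := μ)
          (fun j _ => hw0 j i) (hcol i) (fun j _ => hμ0 j)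
        simpa using this
    _ = ∑ i, ((star U' * A * U') i i).re ^ α := by
        refine Finset.sum_congr rfl fun i _ => ?_
        rw [hdiag i]

lemma diag_re_nonneg {N : ℕ} {A : Matrix (Fin N) (Fin N) ℂ} (hA : A.PosSemidef) (i : Fin N) :
    0 ≤ (A i i).re := by
  have := hA.re_dotProduct_nonneg (Pi.single i 1)
  simpa [dotProduct, Matrix.mulVec, Pi.single_apply, Finset.sum_ite_eq,
    dotProduct_single] using this

/-- Concavity of `ρ ↦ Tr ρ^α`. -/
lemma traceRpow_concave {N m : ℕ} {α : ℝ} (hα0 : 0 < α) (hα1 : α < 1)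
    (ρ : Fin m → Matrix (Fin N) (Fin N) ℂ) (hρ : ∀ k, (ρ k).PosSemidef)
    (p : Fin m → ℝ) (hp : ∀ k, 0 ≤ p k) (hps : ∑ k, p k = 1)
    (hσ : (∑ k, (p k : ℂ) • ρ k).PosSemidef) :
    ∑ k, p k * traceRpow (ρ k) α ≤ traceRpow (∑ k, (p k : ℂ) • ρ k) α := by
  classical
  set σ := ∑ k, (p k : ℂ) • ρ k with hσdef
  set U := hσ.1.eigenvectorUnitary with hU
  set U' : Matrix (Fin N) (Fin N) ℂ := ↑U with hU'
  set q : Fin m → Fin N → ℝ := fun k i => ((star U' * ρ k * U') i i).re with hq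
  have hq0 : ∀ k i, 0 ≤ q k i := by
    intro k i
    exact diag_re_nonneg ((hρ k).conjTranspose_mul_mul_same U') i
  have hkey : ∀ i, hσ.1.eigenvalues i = ∑ k, p k * q k i := by
    intro i
    have h1 : star U' * σ * U' = diagonal (RCLike.ofReal ∘ hσ.1.eigenvalues) :=
      by rw [← hσ.1.conjStarAlgAut_star_eigenvectorUnitary, Unitary.conjStarAlgAut_star_apply]
    have h2 : star U' * σ * U' = ∑ k, (p k : ℂ) • (star U' * ρ k * U') := by
      rw [hσdef]
      rw [Matrix.mul_sum, Matrix.sum_mul]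
      refine Finset.sum_congr rfl fun k _ => ?_
      rw [Matrix.mul_smul, Matrix.smul_mul]
    have h3 := congrArg (fun M => (M i i).re) (h1.symm.trans h2)
    simpa [Matrix.sum_apply, Complex.re_sum, Complex.re_ofReal_mul, hq] using h3
  have hjensen : ∀ i, ∑ k, p k * (q k i) ^ α ≤ (hσ.1.eigenvalues i) ^ α := by
    intro i
    have := (Real.concaveOn_rpow hα0.le hα1.le).le_map_sum
      (t := Finset.univ) (w := p) (p := fun k => q k i)
      (fun k _ => hp k) hps (fun k _ => hq0 k i)
    rw [hkey i]
    simpa using this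
  rw [traceRpow_of_isHermitian hσ.1]
  calc ∑ k, p k * traceRpow (ρ k) α
      ≤ ∑ k, p k * ∑ i, (q k i) ^ α := by
        refine Finset.sum_le_sum fun k _ => ?_
        refine mul_le_mul_of_nonneg_left ?_ (hp k)
        rw [traceRpow_of_isHermitian (hρ k).1]
        exact sum_rpow_diag_le hα0 hα1 (hρ k) U
    _ = ∑ i, ∑ k, p k * (q k i) ^ α := by
        simp only [Finset.mul_sum]
        rw [Finset.sum_comm]
    _ ≤ ∑ i, (hσ.1.eigenvalues i) ^ α := Finset.sum_le_sum fun i _ => hjensen i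

/-- For `α ∈ (0,1)` the quantum Rényi entropy is concave over density matrices. -/
theorem renyiEntropy_concave {N m : ℕ} (α : ℝ) (hα : α ∈ Set.Ioo (0 : ℝ) 1)
    (ρ : Fin m → Matrix (Fin N) (Fin N) ℂ)
    (hρ : ∀ k, (ρ k).PosSemidef) (hTr : ∀ k, (ρ k).trace = 1)
    (p : Fin m → ℝ) (hp : ∀ k, 0 ≤ p k) (hps : ∑ k, p k = 1) :
    ∑ k, p k * renyiEntropy (ρ k) α ≤ renyiEntropy (∑ k, (p k : ℂ) • ρ k) α := by
  classical
  obtain ⟨hα0, hα1⟩ := hα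
  have hsmul : ∀ k, ((p k : ℂ) • ρ k).PosSemidef := by
    intro k
    refine ⟨?_, ?_⟩
    · unfold Matrix.IsHermitian
      rw [Matrix.conjTranspose_smul, (hρ k).1.eq]
      congr 1
      simp [Complex.star_def, Complex.conj_ofReal]
    · exact ((hρ k).smul (Complex.zero_le_real.mpr (hp k))).2
  have hσ : (∑ k, (p k : ℂ) • ρ k).PosSemidef :=
    Finset.sum_induction _ _ (fun A B ha hb => ha.add hb) Matrix.PosSemidef.zero
      (fun k _ => hsmul k)
  have hT1 : ∀ k, 1 ≤ traceRpow (ρ k) α := by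
    intro k
    have heig := trace_eq_sum_eigenvalues' (hρ k).1
    rw [hTr k] at heig
    have hsum : ∑ i, (hρ k).1.eigenvalues i = 1 := by exact_mod_cast heig.symm
    rw [traceRpow_of_isHermitian (hρ k).1]
    calc (1:ℝ) = ∑ i, (hρ k).1.eigenvalues i := hsum.symm
      _ ≤ ∑ i, ((hρ k).1.eigenvalues i) ^ α := by
          refine Finset.sum_le_sum fun i _ => ?_
          have h0 := (hρ k).eigenvalues_nonneg i
          have h1le : (hρ k).1.eigenvalues i ≤ 1 := by
            rw [← hsum]
            exact Finset.single_le_sum (fun j _ => (hρ k).eigenvalues_nonneg j)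
              (Finset.mem_univ i)
          have := Real.rpow_le_rpow_of_exponent_ge' h0 h1le hα0.le hα1.le
          simpa [Real.rpow_one] using this
  have hTσ := traceRpow_concave hα0 hα1 ρ hρ p hp hps hσ
  have hsum1 : (1:ℝ) ≤ ∑ k, p k * traceRpow (ρ k) α := by
    calc (1:ℝ) = ∑ k, p k := hps.symm
      _ ≤ ∑ k, p k * traceRpow (ρ k) α :=
        Finset.sum_le_sum fun k _ => le_mul_of_one_le_right (hp k) (hT1 k)
  have hc : (0:ℝ) ≤ 1/(1-α) := by
    have : (0:ℝ) < 1 - α := by linarith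
    positivity
  have hlog : ∑ k, p k * Real.log (traceRpow (ρ k) α)
      ≤ Real.log (traceRpow (∑ k, (p k : ℂ) • ρ k) α) := by
    calc ∑ k, p k * Real.log (traceRpow (ρ k) α)
        ≤ Real.log (∑ k, p k * traceRpow (ρ k) α) := by
          have := (strictConcaveOn_log_Ioi.concaveOn).le_map_sum
            (t := Finset.univ) (w := p) (p := fun k => traceRpow (ρ k) α)
            (fun k _ => hp k) hps
            (fun k _ => lt_of_lt_of_le one_pos (hT1 k))
          simpa using this
      _ ≤ Real.log (traceRpow (∑ k, (p k : ℂ) • ρ k) α) :=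
          Real.log_le_log (by linarith) hTσ
  simp only [renyiEntropy]
  calc ∑ k, p k * (1/(1-α) * Real.log (traceRpow (ρ k) α))
      = 1/(1-α) * ∑ k, p k * Real.log (traceRpow (ρ k) α) := by
        rw [Finset.mul_sum]
        exact Finset.sum_congr rfl fun k _ => by ring
    _ ≤ 1/(1-α) * Real.log (traceRpow (∑ k, (p k : ℂ) • ρ k) α) :=
        mul_le_mul_of_nonneg_left hlog hc
end

section
/- For α ∈ (0,1) and any finite ensemble ξ = {(p_k, ρ_k)} of density matrices with probability weights, the α-quantum Jensen–Shannon divergence Q_α(ξ) = S_α(∑_k p_k ρ_k) − ∑_k p_k S_α(ρ_k) is nonnegative. -/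
open Matrix BigOperators
open scoped ComplexOrder Kronecker

section Aux

variable {N : ℕ}

/-- Diagonal entries of a PSD matrix have nonneg real part. -/
lemma psd_diag_re_nonneg {M : Matrix (Fin N) (Fin N) ℂ} (hM : M.PosSemidef) (i : Fin N) :
    0 ≤ (M i i).re := by
  have h := hM.re_dotProduct_nonneg (Pi.single i 1)
  have he : dotProduct (star (Pi.single i 1 : Fin N → ℂ)) (M *ᵥ Pi.single i 1) = M i i := by
    simp [dotProduct, mulVec, Pi.single_apply, mul_ite, ite_mul, Finset.sum_ite_eq,
      Pi.star_apply, apply_ite]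
  rw [he] at h
  exact h

/-- The sum of eigenvalues of a Hermitian matrix is the trace. -/
lemma sum_eigenvalues_eq_trace {A : Matrix (Fin N) (Fin N) ℂ} (hA : A.IsHermitian) :
    ((∑ i, hA.eigenvalues i : ℝ) : ℂ) = A.trace := by
  conv_rhs => rw [hA.spectral_theorem, Unitary.conjStarAlgAut_apply]
  rw [Matrix.trace_mul_cycle,
    Matrix.mem_unitaryGroup_iff'.mp (hA.eigenvectorUnitary).2, Matrix.one_mul,
    Matrix.trace_diagonal]
  push_cast
  rfl

/-- Peierls-type inequality: for PSD `A`, unitary `U` and `α ∈ (0,1)`,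
`∑ μ_j^α ≤ ∑_i (U* A U)_{ii}^α`. -/
lemma peierls {α : ℝ} (hα : α ∈ Set.Ioo (0:ℝ) 1)
    {A : Matrix (Fin N) (Fin N) ℂ} (hA : A.PosSemidef)
    {U : Matrix (Fin N) (Fin N) ℂ} (hU : U ∈ Matrix.unitaryGroup (Fin N) ℂ) :
    ∑ j, hA.1.eigenvalues j ^ α ≤ ∑ i, ((star U * A * U) i i).re ^ α := by
  set V : Matrix (Fin N) (Fin N) ℂ := (hA.1.eigenvectorUnitary : Matrix (Fin N) (Fin N) ℂ)
    with hVdef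
  have hVmem : V ∈ Matrix.unitaryGroup (Fin N) ℂ := (hA.1.eigenvectorUnitary).2
  have hUU : U * star U = 1 := Matrix.mem_unitaryGroup_iff.mp hU
  have hUU' : star U * U = 1 := Matrix.mem_unitaryGroup_iff'.mp hU
  have hVV : V * star V = 1 := Matrix.mem_unitaryGroup_iff.mp hVmem
  have hVV' : star V * V = 1 := Matrix.mem_unitaryGroup_iff'.mp hVmem
  set W : Matrix (Fin N) (Fin N) ℂ := star U * V with hWdef
  set μ : Fin N → ℝ := hA.1.eigenvalues with hμdef
  have hWW : W * star W = 1 := by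
    rw [hWdef, Matrix.star_mul, star_star, Matrix.mul_assoc, ← Matrix.mul_assoc V, hVV,
      Matrix.one_mul, hUU']
  have hWW' : star W * W = 1 := by
    rw [hWdef, Matrix.star_mul, star_star, Matrix.mul_assoc, ← Matrix.mul_assoc U, hUU,
      Matrix.one_mul, hVV']
  set b : Fin N → Fin N → ℝ := fun i j => Complex.normSq (W i j) with hbdef
  have hb0 : ∀ i j, 0 ≤ b i j := fun i j => Complex.normSq_nonneg _
  have brow : ∀ i, ∑ j, b i j = 1 := by
    intro i
    have h := congrArg (fun M : Matrix (Fin N) (Fin N) ℂ => (M i i).re) hWW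
    simpa [Matrix.mul_apply, Matrix.star_apply, Matrix.one_apply, Complex.star_def,
      Complex.mul_conj, Complex.re_sum, hbdef] using h
  have bcol : ∀ j, ∑ i, b i j = 1 := by
    intro j
    have h := congrArg (fun M : Matrix (Fin N) (Fin N) ℂ => (M j j).re) hWW'
    have h2 : ∀ i, (star W) j i * W i j = ((b i j : ℝ) : ℂ) := by
      intro i
      rw [Matrix.star_apply]
      rw [mul_comm, Complex.star_def, Complex.mul_conj]
    simpa [Matrix.mul_apply, Matrix.one_apply, h2, Complex.re_sum, hbdef, Complex.normSq_apply] using h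
  have hdecomp : star U * A * U = W * Matrix.diagonal (RCLike.ofReal ∘ μ) * star W := by
    conv_lhs => rw [hA.1.spectral_theorem, Unitary.conjStarAlgAut_apply]
    rw [hWdef, Matrix.star_mul, star_star]
    simp only [Matrix.mul_assoc, hμdef, hVdef]
  have key : ∀ i, ((star U * A * U) i i).re = ∑ j, b i j * μ j := by
    intro i
    have : (star U * A * U) i i = ((∑ j, b i j * μ j : ℝ) : ℂ) := by
      rw [hdecomp, Matrix.mul_apply]
      push_cast
      refine Finset.sum_congr rfl fun j _ => ?_
      rw [Matrix.mul_diagonal, Matrix.star_apply]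
      have : W i j * (RCLike.ofReal ∘ μ) j * star (W i j)
          = (W i j * star (W i j)) * ((μ j : ℂ)) := by
        simp only [Function.comp_apply]
        exact mul_right_comm _ _ _
      rw [this, Complex.star_def, Complex.mul_conj]
    rw [this, Complex.ofReal_re]
  have jensen : ∀ i, ∑ j, b i j * (μ j ^ α) ≤ ((star U * A * U) i i).re ^ α := by
    intro i
    have h := (Real.concaveOn_rpow hα.1.le hα.2.le).le_map_sum
      (t := Finset.univ) (w := b i) (p := μ)
      (fun j _ => hb0 i j) (brow i) (fun j _ => hA.eigenvalues_nonneg j)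
    simp only [smul_eq_mul] at h
    rw [key i]
    exact h
  calc ∑ j, μ j ^ α = ∑ j, (∑ i, b i j) * μ j ^ α := by
        refine Finset.sum_congr rfl fun j _ => ?_
        rw [bcol j, one_mul]
    _ = ∑ i, ∑ j, b i j * μ j ^ α := by
        rw [Finset.sum_comm]
        simp_rw [Finset.sum_mul]
    _ ≤ ∑ i, ((star U * A * U) i i).re ^ α := Finset.sum_le_sum fun i _ => jensen i

/-- For a density matrix, `Tr ρ^α ≥ 1` when `α ∈ (0,1)`. -/
lemma one_le_traceRpow {α : ℝ} (hα : α ∈ Set.Ioo (0:ℝ) 1)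
    {A : Matrix (Fin N) (Fin N) ℂ} (hA : A.PosSemidef) (hTr : A.trace = 1) :
    1 ≤ traceRpow A α := by
  rw [traceRpow, dif_pos hA.1]
  have hsum : ∑ i, hA.1.eigenvalues i = 1 := by
    have := sum_eigenvalues_eq_trace hA.1
    rw [hTr] at this
    exact_mod_cast this
  have hle : ∀ i, hA.1.eigenvalues i ≤ hA.1.eigenvalues i ^ α := by
    intro i
    rcases eq_or_lt_of_le (hA.eigenvalues_nonneg i) with h | h
    · rw [← h, Real.zero_rpow (ne_of_gt hα.1)]
    · have hle1 : hA.1.eigenvalues i ≤ 1 := by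
        rw [← hsum]
        exact Finset.single_le_sum (fun j _ => hA.eigenvalues_nonneg j) (Finset.mem_univ i)
      calc hA.1.eigenvalues i = hA.1.eigenvalues i ^ (1:ℝ) := (Real.rpow_one _).symm
        _ ≤ hA.1.eigenvalues i ^ α := Real.rpow_le_rpow_of_exponent_ge h hle1 hα.2.le
  calc (1:ℝ) = ∑ i, hA.1.eigenvalues i := hsum.symm
    _ ≤ ∑ i, hA.1.eigenvalues i ^ α := Finset.sum_le_sum fun i _ => hle i

end Aux

/-- Nonnegativity of the α-quantum Jensen–Shannon divergence
`Q_α(ξ) = S_α(∑ p_k ρ_k) − ∑ p_k S_α(ρ_k)` for α ∈ (0,1). -/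
theorem qjsd_nonneg {N m : ℕ} (α : ℝ) (hα : α ∈ Set.Ioo (0 : ℝ) 1)
    (ρ : Fin m → Matrix (Fin N) (Fin N) ℂ)
    (hρ : ∀ k, (ρ k).PosSemidef) (hTr : ∀ k, (ρ k).trace = 1)
    (p : Fin m → ℝ) (hp : ∀ k, 0 ≤ p k) (hps : ∑ k, p k = 1) :
    0 ≤ renyiEntropy (∑ k, (p k : ℂ) • ρ k) α - ∑ k, p k * renyiEntropy (ρ k) α := by
  set σ : Matrix (Fin N) (Fin N) ℂ := ∑ k, (p k : ℂ) • ρ k with hσdef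
  have hsm : ∀ k, ((p k : ℂ) • ρ k).PosSemidef := by
    intro k
    constructor
    · show ((p k : ℂ) • ρ k)ᴴ = (p k : ℂ) • ρ k
      rw [Matrix.conjTranspose_smul, (hρ k).1]
      simp [Complex.star_def, Complex.conj_ofReal]
    · exact ((hρ k).smul (show (0:ℂ) ≤ (p k : ℂ) by exact_mod_cast hp k)).2
  have hσ : σ.PosSemidef := by
    rw [hσdef]
    exact Finset.sum_induction _ _ (fun a b ha hb => ha.add hb) Matrix.PosSemidef.zero
      (fun k _ => hsm k)
  set U : Matrix (Fin N) (Fin N) ℂ := (hσ.1.eigenvectorUnitary : Matrix (Fin N) (Fin N) ℂ)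
    with hUdef
  have hUmem : U ∈ Matrix.unitaryGroup (Fin N) ℂ := (hσ.1.eigenvectorUnitary).2
  set d : Fin m → Fin N → ℝ := fun k i => ((star U * ρ k * U) i i).re with hddef
  have hconjPSD : ∀ k, (star U * ρ k * U).PosSemidef := by
    intro k
    rw [Matrix.star_eq_conjTranspose]
    exact (hρ k).conjTranspose_mul_mul_same U
  have hd0 : ∀ k i, 0 ≤ d k i := fun k i => psd_diag_re_nonneg (hconjPSD k) i
  -- eigenvalues of σ as convex combinations of the d's
  have hdspec : ∀ i, hσ.1.eigenvalues i = ∑ k, p k * d k i := by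
    intro i
    have hdiag := hσ.1.conjStarAlgAut_star_eigenvectorUnitary
    rw [Unitary.conjStarAlgAut_star_apply] at hdiag
    have hexp : star U * σ * U = ∑ k, (p k : ℂ) • (star U * ρ k * U) := by
      rw [hσdef]
      rw [Matrix.mul_sum, Matrix.sum_mul]
      refine Finset.sum_congr rfl fun k _ => ?_
      rw [Matrix.mul_smul, Matrix.smul_mul]
    have h := congrArg (fun M : Matrix (Fin N) (Fin N) ℂ => (M i i).re) (hexp.symm.trans hdiag)
    have h2 : ∑ k, p k * d k i = hσ.1.eigenvalues i := by
      simpa [Matrix.sum_apply, Matrix.diagonal_apply_eq, Complex.re_sum, Matrix.smul_apply,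
        smul_eq_mul, Complex.re_ofReal_mul, hddef] using h
    exact h2.symm
  -- Jensen step over the ensemble
  have step1 : ∀ i, ∑ k, p k * (d k i) ^ α ≤ (hσ.1.eigenvalues i) ^ α := by
    intro i
    have h := (Real.concaveOn_rpow hα.1.le hα.2.le).le_map_sum
      (t := Finset.univ) (w := p) (p := fun k => d k i)
      (fun k _ => hp k) hps (fun k _ => hd0 k i)
    simp only [smul_eq_mul] at h
    rw [hdspec i]
    exact h
  -- main trace inequality
  have main : ∑ k, p k * traceRpow (ρ k) α ≤ traceRpow σ α := by
    rw [traceRpow, dif_pos hσ.1]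
    calc ∑ k, p k * traceRpow (ρ k) α
        ≤ ∑ k, p k * ∑ i, (d k i) ^ α := by
          refine Finset.sum_le_sum fun k _ => mul_le_mul_of_nonneg_left ?_ (hp k)
          rw [traceRpow, dif_pos (hρ k).1]
          exact peierls hα (hρ k) hUmem
      _ = ∑ i, ∑ k, p k * (d k i) ^ α := by
          simp_rw [Finset.mul_sum]
          rw [Finset.sum_comm]
      _ ≤ ∑ i, (hσ.1.eigenvalues i) ^ α := Finset.sum_le_sum fun i _ => step1 i
  -- positivity facts
  have hT1 : ∀ k, 1 ≤ traceRpow (ρ k) α := fun k => one_le_traceRpow hα (hρ k) (hTr k)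
  have hTpos : ∀ k, 0 < traceRpow (ρ k) α := fun k => lt_of_lt_of_le one_pos (hT1 k)
  have hsumpos : (0:ℝ) < ∑ k, p k * traceRpow (ρ k) α := by
    calc (0:ℝ) < 1 := one_pos
      _ = ∑ k, p k := hps.symm
      _ ≤ ∑ k, p k * traceRpow (ρ k) α := by
          refine Finset.sum_le_sum fun k _ => ?_
          nlinarith [hT1 k, hp k]
  -- log Jensen
  have hlog : ∑ k, p k * Real.log (traceRpow (ρ k) α)
      ≤ Real.log (∑ k, p k * traceRpow (ρ k) α) := by
    have h := (strictConcaveOn_log_Ioi.concaveOn).le_map_sum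
      (t := Finset.univ) (w := p) (p := fun k => traceRpow (ρ k) α)
      (fun k _ => hp k) hps (fun k _ => hTpos k)
    simpa [smul_eq_mul] using h
  have hlog2 : Real.log (∑ k, p k * traceRpow (ρ k) α) ≤ Real.log (traceRpow σ α) :=
    Real.log_le_log hsumpos main
  have hfinal : ∑ k, p k * Real.log (traceRpow (ρ k) α) ≤ Real.log (traceRpow σ α) :=
    le_trans hlog hlog2
  have hc : (0:ℝ) ≤ 1 / (1 - α) := by
    have : (0:ℝ) < 1 - α := by linarith [hα.2]
    positivity
  have : ∑ k, p k * renyiEntropy (ρ k) α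
      = (1 / (1 - α)) * ∑ k, p k * Real.log (traceRpow (ρ k) α) := by
    rw [Finset.mul_sum]
    refine Finset.sum_congr rfl fun k _ => ?_
    rw [renyiEntropy]
    ring
  rw [this, renyiEntropy, ← mul_sub]
  exact mul_nonneg hc (by linarith [hfinal])
end
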